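/- Let 0 → A₁ → A₂ → A₃ → 0 be a short exact sequence where A₁ is a Serre subcategory of the abelian category A₂ with quotient A₃ (localization of abelian categories). Then the induced sequence of Grothendieck groups K₀(A₁) → K₀(A₂) → K₀(A₃) → 0 is exact. -/

import Mathlib

open CategoryTheory Limits

/-- The Grothendieck group `K₀` of an abelian category: the free abelian group on
objects modulo the relation `[X₂] = [X₁] + [X₃]` for each short exact sequence
`0 → X₁ → X₂ → X₃ → 0`. -/
def K0 (A : Type*) [Category A] [Abelian A] :=
  FreeAbelianGroup A ⧸ AddSubgroup.closure
    {x | ∃ S : ShortComplex A, S.ShortExact ∧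
      x = FreeAbelianGroup.of S.X₂ - FreeAbelianGroup.of S.X₁ - FreeAbelianGroup.of S.X₃}

instance (A : Type*) [Category A] [Abelian A] : AddCommGroup (K0 A) :=
  QuotientAddGroup.Quotient.addCommGroup _

/-- The class of an object in `K₀`. -/
def K0.mk {A : Type*} [Category A] [Abelian A] (X : A) : K0 A :=
  QuotientAddGroup.mk (FreeAbelianGroup.of X)

/-- `K₀` of a Serre subcategory, given by a predicate `P` on objects of an ambient
abelian category: free abelian group on objects satisfying `P`, modulo relations
coming from short exact sequences of the ambient category all of whose terms
satisfy `P`. -/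
def K0Sub {A : Type*} [Category A] [Abelian A] (P : A → Prop) :=
  FreeAbelianGroup {X : A // P X} ⧸ AddSubgroup.closure
    {x | ∃ (S : ShortComplex A) (h₁ : P S.X₁) (h₂ : P S.X₂) (h₃ : P S.X₃),
      S.ShortExact ∧
      x = FreeAbelianGroup.of (⟨S.X₂, h₂⟩ : {X : A // P X})
        - FreeAbelianGroup.of ⟨S.X₁, h₁⟩ - FreeAbelianGroup.of ⟨S.X₃, h₃⟩}

instance {A : Type*} [Category A] [Abelian A] (P : A → Prop) : AddCommGroup (K0Sub P) :=
  QuotientAddGroup.Quotient.addCommGroup _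

/-- The class of an object satisfying `P` in `K₀` of the Serre subcategory. -/
def K0Sub.mk {A : Type*} [Category A] [Abelian A] {P : A → Prop} (X : A) (hX : P X) :
    K0Sub P :=
  QuotientAddGroup.mk (FreeAbelianGroup.of ⟨X, hX⟩)

/-- The class of morphisms of the ambient abelian category whose kernel and cokernel
lie in the Serre subcategory determined by `P`; the Serre quotient is the
localization at this class. -/
def serreW {A : Type*} [Category A] [Abelian A] (P : A → Prop) : MorphismProperty A :=
  fun _ _ f => P (kernel f) ∧ P (cokernel f)

/-! ### Auxiliary lemmas -/

set_option linter.unusedSectionVars false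

open ZeroObject

section K0Basic

variable {A : Type*} [Category A] [Abelian A]

lemma K0.mk_rel (S : ShortComplex A) (hS : S.ShortExact) :
    K0.mk S.X₂ = K0.mk S.X₁ + K0.mk S.X₃ := by
  have h : FreeAbelianGroup.of S.X₂ - FreeAbelianGroup.of S.X₁ - FreeAbelianGroup.of S.X₃ ∈
      AddSubgroup.closure
        {x | ∃ S : ShortComplex A, S.ShortExact ∧
          x = FreeAbelianGroup.of S.X₂ - FreeAbelianGroup.of S.X₁ - FreeAbelianGroup.of S.X₃} :=
    AddSubgroup.subset_closure ⟨S, hS, rfl⟩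
  show QuotientAddGroup.mk _ = QuotientAddGroup.mk _ + QuotientAddGroup.mk _
  show QuotientAddGroup.mk _ = QuotientAddGroup.mk (_ + _)
  exact (QuotientAddGroup.eq_iff_sub_mem).2 (by convert h using 1; abel)

lemma K0.mk_zero_of_isZero {Z : A} (hZ : IsZero Z) : K0.mk Z = 0 := by
  have hS : (ShortComplex.mk (0 : Z ⟶ Z) (0 : Z ⟶ Z) (by simp)).ShortExact := by
    have m : Mono (0 : Z ⟶ Z) := ⟨fun _ _ _ => hZ.eq_of_tgt _ _⟩
    have e : Epi (0 : Z ⟶ Z) := ⟨fun _ _ _ => hZ.eq_of_src _ _⟩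
    exact ShortComplex.ShortExact.mk' (ShortComplex.exact_of_isZero_X₂ _ hZ) m e
  have h2 : K0.mk Z = K0.mk Z + K0.mk Z := K0.mk_rel _ hS
  exact add_eq_left.mp h2.symm

lemma K0.mk_eq_of_iso {X Y : A} (e : X ≅ Y) : K0.mk X = K0.mk Y := by
  have hS : (ShortComplex.mk e.hom (0 : Y ⟶ (0 : A)) (by simp)).ShortExact := by
    have m : Mono e.hom := inferInstance
    have ep : Epi (0 : Y ⟶ (0 : A)) := by
      constructor
      intro R a b h
      apply (isZero_zero A).eq_of_src
    refine ShortComplex.ShortExact.mk' ?_ m ep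
    rw [ShortComplex.exact_iff_epi _ (by simp)]
    infer_instance
  have h := K0.mk_rel _ hS
  dsimp at h
  rw [K0.mk_zero_of_isZero (isZero_zero A)] at h
  rw [h]; abel

lemma K0.hom_ext {H : Type*} [AddCommGroup H] {φ ψ : K0 A →+ H}
    (h : ∀ X : A, φ (K0.mk X) = ψ (K0.mk X)) : φ = ψ := by
  apply AddMonoidHom.ext
  intro x
  refine QuotientAddGroup.induction_on x ?_
  intro w
  refine FreeAbelianGroup.induction_on w ?_ ?_ ?_ ?_
  · show φ (QuotientAddGroup.mk 0) = ψ (QuotientAddGroup.mk 0)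
    exact (map_zero φ).trans (map_zero ψ).symm
  · intro x
    exact h x
  · intro x hx
    show φ (QuotientAddGroup.mk (-_)) = ψ (QuotientAddGroup.mk (-_))
    exact (map_neg φ _).trans ((congrArg Neg.neg hx).trans (map_neg ψ _).symm)
  · intro x y hx hy
    show φ (QuotientAddGroup.mk (_ + _)) = ψ (QuotientAddGroup.mk (_ + _))
    exact (map_add φ _ _).trans ((congr_arg₂ (· + ·) hx hy).trans (map_add ψ _ _).symm)

lemma K0Sub.hom_ext {P : A → Prop} {H : Type*} [AddCommGroup H] {φ ψ : K0Sub P →+ H}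
    (h : ∀ (X : A) (hX : P X), φ (K0Sub.mk X hX) = ψ (K0Sub.mk X hX)) : φ = ψ := by
  apply AddMonoidHom.ext
  intro x
  refine QuotientAddGroup.induction_on x ?_
  intro w
  refine FreeAbelianGroup.induction_on w ?_ ?_ ?_ ?_
  · show φ (QuotientAddGroup.mk 0) = ψ (QuotientAddGroup.mk 0)
    exact (map_zero φ).trans (map_zero ψ).symm
  · intro x
    exact h x.1 x.2
  · intro x hx
    show φ (QuotientAddGroup.mk (-_)) = ψ (QuotientAddGroup.mk (-_))
    exact (map_neg φ _).trans ((congrArg Neg.neg hx).trans (map_neg ψ _).symm)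
  · intro x y hx hy
    show φ (QuotientAddGroup.mk (_ + _)) = ψ (QuotientAddGroup.mk (_ + _))
    exact (map_add φ _ _).trans ((congr_arg₂ (· + ·) hx hy).trans (map_add ψ _ _).symm)

variable {B : Type*} [Category B] [Abelian B]

/-- The homomorphism on `K₀` induced by an exact functor. -/
noncomputable def K0.map (F : A ⥤ B) [F.PreservesZeroMorphisms] [PreservesFiniteLimits F]
    [PreservesFiniteColimits F] : K0 A →+ K0 B :=
  QuotientAddGroup.lift _ (FreeAbelianGroup.lift (fun X => K0.mk (F.obj X)))
    (by
      refine (AddSubgroup.closure_le _).2 ?_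
      rintro x ⟨S, hS, rfl⟩
      have h1 : (S.map F).ShortExact := hS.map_of_exact F
      have h2 := K0.mk_rel _ h1
      show FreeAbelianGroup.lift _ _ = (0 : K0 B)
      rw [map_sub, map_sub, FreeAbelianGroup.lift_apply_of, FreeAbelianGroup.lift_apply_of,
        FreeAbelianGroup.lift_apply_of]
      have h2' : K0.mk (F.obj S.X₂) = K0.mk (F.obj S.X₁) + K0.mk (F.obj S.X₃) := h2
      rw [h2']
      abel)

lemma K0.map_mk (F : A ⥤ B) [F.PreservesZeroMorphisms] [PreservesFiniteLimits F]
    [PreservesFiniteColimits F] (X : A) : K0.map F (K0.mk X) = K0.mk (F.obj X) := by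
  show QuotientAddGroup.lift _ _ _ (QuotientAddGroup.mk _) = _
  rw [QuotientAddGroup.lift_mk]
  exact FreeAbelianGroup.lift_apply_of _ _

lemma K0.mk_sub_of_serreW {U V : A} (a : U ⟶ V) :
    K0.mk U - K0.mk V = K0.mk (kernel a) - K0.mk (cokernel a) := by
  have w1 : kernel.ι a ≫ factorThruImage a = 0 :=
    zero_of_comp_mono (image.ι a) (by rw [Category.assoc, image.fac, kernel.condition])
  have hS1 : (ShortComplex.mk (kernel.ι a) (factorThruImage a) w1).ShortExact := by
    refine ShortComplex.ShortExact.mk' ?_ inferInstance inferInstance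
    let φ : ShortComplex.mk (kernel.ι a) (factorThruImage a) w1 ⟶
        ShortComplex.mk (kernel.ι a) a (kernel.condition a) :=
      { τ₁ := 𝟙 _, τ₂ := 𝟙 _, τ₃ := image.ι a,
        comm₁₂ := by simp, comm₂₃ := by simp }
    haveI : Epi φ.τ₁ := (inferInstance : Epi (𝟙 _))
    haveI : IsIso φ.τ₂ := (inferInstance : IsIso (𝟙 _))
    haveI : Mono φ.τ₃ := (inferInstance : Mono (image.ι a))
    exact (ShortComplex.exact_iff_of_epi_of_isIso_of_mono φ).2 (ShortComplex.exact_kernel a)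
  have w2 : image.ι a ≫ cokernel.π a = 0 :=
    zero_of_epi_comp (factorThruImage a)
      (by rw [← Category.assoc, image.fac, cokernel.condition])
  have hS2 : (ShortComplex.mk (image.ι a) (cokernel.π a) w2).ShortExact := by
    refine ShortComplex.ShortExact.mk' ?_ inferInstance inferInstance
    let ψ : ShortComplex.mk a (cokernel.π a) (cokernel.condition a) ⟶
        ShortComplex.mk (image.ι a) (cokernel.π a) w2 :=
      { τ₁ := factorThruImage a, τ₂ := 𝟙 _, τ₃ := 𝟙 _,
        comm₁₂ := by simp, comm₂₃ := by simp }
    haveI : Epi ψ.τ₁ := (inferInstance : Epi (factorThruImage a))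
    haveI : IsIso ψ.τ₂ := (inferInstance : IsIso (𝟙 _))
    haveI : Mono ψ.τ₃ := (inferInstance : Mono (𝟙 _))
    exact (ShortComplex.exact_iff_of_epi_of_isIso_of_mono ψ).1 (ShortComplex.exact_cokernel a)
  have e1 := K0.mk_rel _ hS1
  have e2 := K0.mk_rel _ hS2
  dsimp at e1 e2
  rw [e1, e2]
  abel

end K0Basic
namespace SerreAux
open CategoryTheory.Abelian CategoryTheory.Abelian.Pseudoelement
attribute [local instance] CategoryTheory.Abelian.Pseudoelement.objectToSort
  CategoryTheory.Abelian.Pseudoelement.homToFun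

variable {A : Type*} [Category A] [Abelian A] {P : A → Prop}

lemma pseudo_id_apply {X : A} (a : X) : pseudoApply (𝟙 X) a = a :=
  Quotient.inductionOn a fun b =>
    Quotient.sound ⟨b.left, 𝟙 _, 𝟙 _, (by dsimp only [app]; infer_instance), inferInstance, by dsimp only [app]; simp⟩

lemma pIso (hsub : ∀ (X Y : A) (f : X ⟶ Y), Mono f → P Y → P X)
    {X Y : A} (e : X ≅ Y) (hY : P Y) : P X :=
  hsub X Y e.hom inferInstance hY

lemma shortExact_of_mono {X Y : A} (m : X ⟶ Y) [Mono m] :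
    (ShortComplex.mk m (cokernel.π m) (cokernel.condition m)).ShortExact :=
  ShortComplex.ShortExact.mk' (ShortComplex.exact_cokernel m) inferInstance inferInstance

lemma shortExact_of_epi {X Y : A} (e : X ⟶ Y) [Epi e] :
    (ShortComplex.mk (kernel.ι e) e (kernel.condition e)).ShortExact :=
  ShortComplex.ShortExact.mk' (ShortComplex.exact_kernel e) inferInstance inferInstance

lemma serreW_id (hsub : ∀ (X Y : A) (f : X ⟶ Y), Mono f → P Y → P X)
    (h0 : P (0 : A)) (X : A) : serreW P (𝟙 X) :=
  ⟨pIso hsub (kernel.ofMono (𝟙 X)) h0, pIso hsub (cokernel.ofEpi (𝟙 X)) h0⟩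

lemma serreW_comp
    (hsub : ∀ (X Y : A) (f : X ⟶ Y), Mono f → P Y → P X)
    (hquot : ∀ (X Y : A) (f : X ⟶ Y), Epi f → P X → P Y)
    (hext : ∀ S : ShortComplex A, S.ShortExact → P S.X₁ → P S.X₃ → P S.X₂)
    {X Y Z : A} (s : X ⟶ Y) (t : Y ⟶ Z)
    (hs : serreW P s) (ht : serreW P t) : serreW P (s ≫ t) := by
  constructor
  · -- kernel side
    let u : kernel s ⟶ kernel (s ≫ t) :=
      kernel.lift (s ≫ t) (kernel.ι s) (by simp)
    have hu : u ≫ kernel.ι (s ≫ t) = kernel.ι s := kernel.lift_ι _ _ _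
    have hmu : Mono u := by
      have : Mono (u ≫ kernel.ι (s ≫ t)) := by rw [hu]; infer_instance
      exact mono_of_mono u (kernel.ι (s ≫ t))
    let v : kernel (s ≫ t) ⟶ kernel t :=
      kernel.lift t (kernel.ι (s ≫ t) ≫ s) (by simp)
    have hv : v ≫ kernel.ι t = kernel.ι (s ≫ t) ≫ s := kernel.lift_ι _ _ _
    have huv : u ≫ v = 0 := by
      have h1 : (u ≫ v) ≫ kernel.ι t = 0 := by
        rw [Category.assoc, hv, ← Category.assoc, hu, kernel.condition]
      exact zero_of_comp_mono _ h1
    let w : cokernel u ⟶ kernel t := cokernel.desc u v huv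
    have hw : Mono w := by
      apply mono_of_zero_of_map_zero
      intro a ha
      obtain ⟨b, hb⟩ := pseudo_surjective_of_epi (cokernel.π u) a
      have hvb : v b = 0 := by
        have h2 := Pseudoelement.comp_apply (cokernel.π u) w b
        rw [cokernel.π_desc] at h2
        rw [h2, hb, ha]
      have hsb : s ((kernel.ι (s ≫ t)) b) = 0 := by
        have h1 := Pseudoelement.comp_apply v (kernel.ι t) b
        rw [hv] at h1
        rw [hvb, apply_zero] at h1
        rw [← Pseudoelement.comp_apply]
        exact h1
      obtain ⟨c, hc⟩ := pseudo_exact_of_exact (ShortComplex.exact_kernel s) _ hsb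
      have hcb : u c = b := by
        apply pseudo_injective_of_mono (kernel.ι (s ≫ t))
        rw [← Pseudoelement.comp_apply, hu]
        exact hc
      calc a = (cokernel.π u) b := hb.symm
        _ = (cokernel.π u) (u c) := by rw [hcb]
        _ = (u ≫ cokernel.π u) c := (Pseudoelement.comp_apply _ _ _).symm
        _ = (0 : kernel s ⟶ cokernel u) c := by rw [cokernel.condition]
        _ = 0 := zero_apply _ _
    have hPcoku : P (cokernel u) := hsub _ _ w hw ht.1
    have hses : (ShortComplex.mk u (cokernel.π u) (cokernel.condition u)).ShortExact :=
      @shortExact_of_mono _ _ _ _ _ u hmu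
    exact hext _ hses hs.1 hPcoku
  · -- cokernel side
    let e : cokernel (s ≫ t) ⟶ cokernel t :=
      cokernel.desc (s ≫ t) (cokernel.π t) (by simp)
    have he : cokernel.π (s ≫ t) ≫ e = cokernel.π t := cokernel.π_desc _ _ _
    have hee : Epi e := by
      have : Epi (cokernel.π (s ≫ t) ≫ e) := by rw [he]; infer_instance
      exact epi_of_epi (cokernel.π (s ≫ t)) e
    let d : cokernel s ⟶ cokernel (s ≫ t) :=
      cokernel.desc s (t ≫ cokernel.π (s ≫ t)) (by rw [← Category.assoc]; exact cokernel.condition _)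
    have hd : cokernel.π s ≫ d = t ≫ cokernel.π (s ≫ t) := cokernel.π_desc _ _ _
    have hde : d ≫ e = 0 := by
      have h1 : cokernel.π s ≫ d ≫ e = 0 := by
        rw [← Category.assoc, hd, Category.assoc, he, cokernel.condition]
      exact zero_of_epi_comp _ h1
    let m : cokernel s ⟶ kernel e := kernel.lift e d hde
    have hmι : m ≫ kernel.ι e = d := kernel.lift_ι _ _ _
    have hm : Epi m := by
      apply epi_of_pseudo_surjective
      intro k
      obtain ⟨z, hz⟩ := pseudo_surjective_of_epi (cokernel.π (s ≫ t)) (kernel.ι e k)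
      have h1 : cokernel.π t z = 0 := by
        have h2 := Pseudoelement.comp_apply (cokernel.π (s ≫ t)) e z
        rw [he] at h2
        rw [h2, hz, ← Pseudoelement.comp_apply, kernel.condition, Pseudoelement.zero_apply]
      obtain ⟨y, hy⟩ := pseudo_exact_of_exact (ShortComplex.exact_cokernel t) z h1
      refine ⟨(cokernel.π s) y, ?_⟩
      apply pseudo_injective_of_mono (kernel.ι e)
      rw [← Pseudoelement.comp_apply, hmι, ← Pseudoelement.comp_apply, hd, Pseudoelement.comp_apply, hy, hz]
    have hK : P (kernel e) := hquot _ _ m hm hs.2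
    have hses : (ShortComplex.mk (kernel.ι e) e (kernel.condition e)).ShortExact :=
      @shortExact_of_epi _ _ _ _ _ e hee
    exact hext _ hses hK ht.2

lemma serreW_pushout_inr
    (hsub : ∀ (X Y : A) (f : X ⟶ Y), Mono f → P Y → P X)
    (hquot : ∀ (X Y : A) (f : X ⟶ Y), Epi f → P X → P Y)
    {X' X Y : A} (s : X' ⟶ X) (f : X' ⟶ Y) (hs : serreW P s) :
    serreW P (pushout.inr s f : Y ⟶ pushout s f) := by
  constructor
  · -- kernel side, via pseudoelement chase on the presentation of the pushout
    let φ : X' ⟶ X ⊞ Y := biprod.lift s (-f)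
    let bp : X ⊞ Y ⟶ pushout s f := Abelian.BiproductToPushoutIsCokernel.biproductToPushout s f
    have hzero : φ ≫ bp = 0 := by
      simp [φ, bp, Abelian.BiproductToPushoutIsCokernel.biproductToPushout, pushout.condition]
    have hexact : (ShortComplex.mk φ bp hzero).Exact :=
      ShortComplex.exact_of_g_is_cokernel _
        (Abelian.BiproductToPushoutIsCokernel.isColimitBiproductToPushout s f)
    let κ : kernel s ⟶ kernel (pushout.inr s f) :=
      kernel.lift _ (kernel.ι s ≫ f)
        (by rw [Category.assoc, ← pushout.condition, ← Category.assoc, kernel.condition,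
            zero_comp])
    have hκι : κ ≫ kernel.ι (pushout.inr s f) = kernel.ι s ≫ f := kernel.lift_ι _ _ _
    have hκ : Epi κ := by
      apply epi_of_pseudo_surjective
      intro k
      have h1 : bp ((biprod.inr : Y ⟶ X ⊞ Y) (kernel.ι (pushout.inr s f) k)) = 0 := by
        rw [← Pseudoelement.comp_apply]
        have : (biprod.inr : Y ⟶ X ⊞ Y) ≫ bp = pushout.inr s f := biprod.inr_desc _ _
        rw [this, ← Pseudoelement.comp_apply, kernel.condition, Pseudoelement.zero_apply]
      obtain ⟨x', hx'⟩ := pseudo_exact_of_exact hexact _ h1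
      have hsx : s ((-𝟙 X' : X' ⟶ X') x') = 0 := by
        rw [← Pseudoelement.comp_apply]
        have h2 : (-𝟙 X' : X' ⟶ X') ≫ s = s ≫ (-𝟙 X) := by simp
        rw [h2, Pseudoelement.comp_apply]
        have h3 : s x' = 0 := by
          have h4 := Pseudoelement.comp_apply φ biprod.fst x'
          have h5 : φ ≫ (biprod.fst : X ⊞ Y ⟶ X) = s := by simp [φ]
          rw [h5] at h4
          rw [h4, hx', ← Pseudoelement.comp_apply, biprod.inr_fst, Pseudoelement.zero_apply]
        rw [h3, apply_zero]
      have hfx : f ((-𝟙 X' : X' ⟶ X') x') = kernel.ι (pushout.inr s f) k := by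
        rw [← Pseudoelement.comp_apply]
        have h2 : (-𝟙 X' : X' ⟶ X') ≫ f = -f := by simp
        rw [h2]
        have h4 := Pseudoelement.comp_apply φ biprod.snd x'
        have h5 : φ ≫ (biprod.snd : X ⊞ Y ⟶ Y) = -f := by simp [φ]
        rw [h5] at h4
        rw [h4, hx', ← Pseudoelement.comp_apply, biprod.inr_snd, pseudo_id_apply]
      obtain ⟨p, hp⟩ := pseudo_exact_of_exact (ShortComplex.exact_kernel s) _ hsx
      refine ⟨p, ?_⟩
      apply pseudo_injective_of_mono (kernel.ι (pushout.inr s f))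
      rw [← Pseudoelement.comp_apply, hκι, Pseudoelement.comp_apply, hp, hfx]
    exact hquot _ _ κ hκ hs.1
  · -- cokernel side : cokernel (inr) ≅ cokernel s
    have h1 : s ≫ pushout.inl s f ≫ cokernel.π (pushout.inr s f) = 0 := by
      rw [← Category.assoc, pushout.condition, Category.assoc, cokernel.condition, comp_zero]
    let α : cokernel s ⟶ cokernel (pushout.inr s f) :=
      cokernel.desc s (pushout.inl s f ≫ cokernel.π (pushout.inr s f)) h1
    let β' : pushout s f ⟶ cokernel s :=
      pushout.desc (cokernel.π s) 0 (by rw [cokernel.condition, comp_zero])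
    let β : cokernel (pushout.inr s f) ⟶ cokernel s :=
      cokernel.desc _ β' (by simp only [β']; exact pushout.inr_desc _ _ _)
    have hba : β' ≫ α = cokernel.π (pushout.inr s f) := by
      apply pushout.hom_ext
      · rw [← Category.assoc, pushout.inl_desc]
        simp [α]
      · rw [← Category.assoc, pushout.inr_desc, zero_comp, cokernel.condition]
    have e : cokernel s ≅ cokernel (pushout.inr s f) := by
      refine ⟨α, β, ?_, ?_⟩
      · rw [← cancel_epi (cokernel.π s)]
        simp [α, β, β']; exact pushout.inl_desc _ _ _
      · rw [← cancel_epi (cokernel.π (pushout.inr s f)), ← Category.assoc]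
        have hπβ : cokernel.π (pushout.inr s f) ≫ β = β' := cokernel.π_desc _ _ _
        rw [hπβ, hba, Category.comp_id]
    exact pIso hsub e.symm hs.2

lemma serreW_ext_left
    (hsub : ∀ (X Y : A) (f : X ⟶ Y), Mono f → P Y → P X)
    (hquot : ∀ (X Y : A) (f : X ⟶ Y), Epi f → P X → P Y)
    (h0 : P (0 : A))
    {X' X Y : A} (f₁ f₂ : X ⟶ Y) (s : X' ⟶ X) (hs : serreW P s)
    (heq : s ≫ f₁ = s ≫ f₂) :
    ∃ (Y' : A) (t : Y ⟶ Y') (_ : serreW P t), f₁ ≫ t = f₂ ≫ t := by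
  have hsh : s ≫ (f₁ - f₂) = 0 := by rw [Preadditive.comp_sub, heq, sub_self]
  let h' : cokernel s ⟶ Y := cokernel.desc s (f₁ - f₂) hsh
  refine ⟨cokernel h', cokernel.π h', ⟨?_, ?_⟩, ?_⟩
  · exact hquot _ _ (Abelian.factorThruImage h') inferInstance hs.2
  · exact pIso hsub (cokernel.ofEpi _) h0
  · have h2 : (f₁ - f₂) ≫ cokernel.π h' = 0 := by
      rw [← cokernel.π_desc s (f₁ - f₂) hsh, Category.assoc, cokernel.condition, comp_zero]
    rw [Preadditive.sub_comp] at h2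
    rw [← sub_eq_zero]
    exact h2

lemma serreW_hasLeftCalculus
    (hsub : ∀ (X Y : A) (f : X ⟶ Y), Mono f → P Y → P X)
    (hquot : ∀ (X Y : A) (f : X ⟶ Y), Epi f → P X → P Y)
    (hext : ∀ S : ShortComplex A, S.ShortExact → P S.X₁ → P S.X₃ → P S.X₂)
    (h0 : P (0 : A)) :
    (serreW P).HasLeftCalculusOfFractions where
  id_mem := serreW_id hsub h0
  comp_mem _ _ hf hg := serreW_comp hsub hquot hext _ _ hf hg
  exists_leftFraction X Y φ :=
    ⟨⟨pushout.inl φ.s φ.f, pushout.inr φ.s φ.f, serreW_pushout_inr hsub hquot φ.s φ.f φ.hs⟩,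
      pushout.condition.symm⟩
  ext X' X Y f₁ f₂ s hs heq := serreW_ext_left hsub hquot h0 f₁ f₂ s hs heq

end SerreAux

namespace SerreAux

variable {A : Type*} [Category A] [Abelian A] {P : A → Prop}
variable {B : Type*} [Category B] [Abelian B]
variable (q : A ⥤ B) [q.Additive] [PreservesFiniteLimits q] [PreservesFiniteColimits q]

lemma isZero_q_obj (hsub : ∀ (X Y : A) (f : X ⟶ Y), Mono f → P Y → P X)
    (h0 : P (0 : A)) [q.IsLocalization (serreW P)] {X : A} (hX : P X) :
    IsZero (q.obj X) := by
  have hw : serreW P (0 : X ⟶ (0 : A)) :=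
    ⟨pIso hsub kernelZeroIsoSource hX, pIso hsub cokernelZeroIsoTarget h0⟩
  have hiso := Localization.inverts q (serreW P) _ hw
  have hmap : q.map (0 : X ⟶ (0 : A)) = 0 := q.map_zero _ _
  rw [hmap] at hiso
  rw [IsZero.iff_id_eq_zero]
  calc 𝟙 (q.obj X) = (0 : q.obj X ⟶ q.obj (0 : A)) ≫ inv 0 := (IsIso.hom_inv_id _).symm
    _ = 0 := zero_comp

lemma P_of_isZero_q_obj (hsub : ∀ (X Y : A) (f : X ⟶ Y), Mono f → P Y → P X)
    [q.IsLocalization (serreW P)] [(serreW P).HasLeftCalculusOfFractions]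
    {Z : A} (hZ : IsZero (q.obj Z)) : P Z := by
  have h1 : q.map (𝟙 Z) = q.map (0 : Z ⟶ Z) := by
    rw [q.map_id, q.map_zero]
    exact hZ.eq_of_src _ _
  obtain ⟨Z', t, ht, h2⟩ := (MorphismProperty.map_eq_iff_postcomp q (serreW P) _ _).1 h1
  rw [Category.id_comp, zero_comp] at h2
  rw [h2] at ht
  exact pIso hsub kernelZeroIsoSource.symm ht.1

lemma serreW_of_isIso_q_map (hsub : ∀ (X Y : A) (f : X ⟶ Y), Mono f → P Y → P X)
    [q.IsLocalization (serreW P)] [(serreW P).HasLeftCalculusOfFractions]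
    {U V : A} (a : U ⟶ V) (h : IsIso (q.map a)) : serreW P a := by
  haveI := h
  constructor
  · apply P_of_isZero_q_obj q hsub
    have e : q.obj (kernel a) ≅ kernel (q.map a) := PreservesKernel.iso q a
    exact IsZero.of_iso (isZero_zero B) (e ≪≫ kernel.ofMono (q.map a))
  · apply P_of_isZero_q_obj q hsub
    have e : q.obj (cokernel a) ≅ cokernel (q.map a) := PreservesCokernel.iso q a
    exact IsZero.of_iso (isZero_zero B) (e ≪≫ cokernel.ofEpi (q.map a))

end SerreAux

/-- for a Serre subcategory `A₁ ⊆ A₂` (given by a predicate `P`) with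
Serre quotient `q : A₂ ⥤ A₃`, the induced sequence of Grothendieck groups
`K₀(A₁) → K₀(A₂) → K₀(A₃) → 0` is exact. -/
theorem K0_exact_of_serre_quotient
    {A₂ : Type u} [Category.{v} A₂] [Abelian A₂]
    {A₃ : Type u'} [Category.{v'} A₃] [Abelian A₃]
    (P : A₂ → Prop)
    -- `P` cuts out a Serre subcategory: closed under subobjects, quotients, extensions
    (hsub : ∀ (X Y : A₂) (f : X ⟶ Y), Mono f → P Y → P X)
    (hquot : ∀ (X Y : A₂) (f : X ⟶ Y), Epi f → P X → P Y)
    (hext : ∀ S : ShortComplex A₂, S.ShortExact → P S.X₁ → P S.X₃ → P S.X₂)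
    -- `q` is the Serre quotient functor: an exact localization at `serreW P`
    (q : A₂ ⥤ A₃) [q.Additive] [PreservesFiniteLimits q] [PreservesFiniteColimits q]
    (hloc : q.IsLocalization (serreW P))
    -- the induced maps on Grothendieck groups
    (f : K0Sub P →+ K0 A₂) (hf : ∀ (X : A₂) (hX : P X), f (K0Sub.mk X hX) = K0.mk X)
    (g : K0 A₂ →+ K0 A₃) (hg : ∀ X : A₂, g (K0.mk X) = K0.mk (q.obj X)) :
    Function.Surjective g ∧ Function.Exact f g := by
  haveI := hloc
  haveI : q.EssSurj := Localization.essSurj q (serreW P)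
  have surj : Function.Surjective g := by
    intro c
    refine QuotientAddGroup.induction_on c ?_
    intro w
    refine FreeAbelianGroup.induction_on w ?_ ?_ ?_ ?_
    · exact ⟨0, by rw [map_zero, QuotientAddGroup.mk_zero]; rfl⟩
    · intro Y
      exact ⟨K0.mk (q.objPreimage Y), by rw [hg, K0.mk_eq_of_iso (q.objObjPreimageIso Y)]; rfl⟩
    · rintro x ⟨b, hb⟩
      refine ⟨-b, ?_⟩
      rw [map_neg, hb, QuotientAddGroup.mk_neg]; rfl
    · rintro x y ⟨b, hb⟩ ⟨c, hc⟩
      refine ⟨b + c, ?_⟩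
      rw [map_add, hb, hc, QuotientAddGroup.mk_add]; rfl
  refine ⟨surj, ?_⟩
  by_cases h0 : P (0 : A₂)
  · -- the main case: `P` contains the zero object
    haveI : (serreW P).HasLeftCalculusOfFractions :=
      SerreAux.serreW_hasLeftCalculus hsub hquot hext h0
    set M : AddSubgroup (K0 A₂) := f.range with hM
    let p : K0 A₂ →+ K0 A₂ ⧸ M := QuotientAddGroup.mk' M
    have hMzero : ∀ (X : A₂), P X → p (K0.mk X) = 0 := by
      intro X hX
      exact (QuotientAddGroup.eq_zero_iff _).2 ⟨K0Sub.mk X hX, hf X hX⟩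
    have key : ∀ {U V : A₂} (a : U ⟶ V), serreW P a → p (K0.mk U) = p (K0.mk V) := by
      intro U V a ha
      have h2 := congrArg p (K0.mk_sub_of_serreW a)
      rw [map_sub, map_sub, hMzero _ ha.1, hMzero _ ha.2] at h2
      exact sub_eq_zero.mp (by rw [h2]; abel)
    have keyIso : ∀ (X X' : A₂), (q.obj X ≅ q.obj X') → p (K0.mk X) = p (K0.mk X') := by
      intro X X' e
      obtain ⟨φ, hφ⟩ := Localization.exists_leftFraction q (serreW P) e.hom
      have hcomp := φ.map_comp_map_s q (Localization.inverts q (serreW P))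
      rw [← hφ] at hcomp
      haveI : IsIso (q.map φ.s) := Localization.inverts q (serreW P) _ φ.hs
      have hiso : IsIso (q.map φ.f) := by rw [← hcomp]; infer_instance
      have h1 : serreW P φ.f := SerreAux.serreW_of_isIso_q_map q hsub φ.f hiso
      exact (key φ.f h1).trans (key φ.s φ.hs).symm
    have liftSES : ∀ (T : ShortComplex A₃), T.ShortExact →
        p (K0.mk (q.objPreimage T.X₂)) =
          p (K0.mk (q.objPreimage T.X₁)) + p (K0.mk (q.objPreimage T.X₃)) := by
      intro T hT
      haveI := hT.mono_f
      let X₁ := q.objPreimage T.X₁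
      let X₂ := q.objPreimage T.X₂
      let e₁ : q.obj X₁ ≅ T.X₁ := q.objObjPreimageIso T.X₁
      let e₂ : q.obj X₂ ≅ T.X₂ := q.objObjPreimageIso T.X₂
      let φh : q.obj X₁ ⟶ q.obj X₂ := e₁.hom ≫ T.f ≫ e₂.inv
      haveI : Mono φh := by dsimp [φh]; infer_instance
      obtain ⟨φ, hφ⟩ := Localization.exists_leftFraction q (serreW P) φh
      haveI : IsIso (q.map φ.s) := Localization.inverts q (serreW P) _ φ.hs
      have hcomp := φ.map_comp_map_s q (Localization.inverts q (serreW P))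
      rw [← hφ] at hcomp
      haveI hmono : Mono (q.map φ.f) := by
        rw [← hcomp]; exact mono_comp _ _
      have hfac : q.map (factorThruImage φ.f) ≫ q.map (image.ι φ.f) = q.map φ.f := by
        rw [← q.map_comp, image.fac]
      haveI hepiq : Epi (q.map (factorThruImage φ.f)) := preserves_epi_of_preservesColimit q _
      haveI hmonoq : Mono (q.map (factorThruImage φ.f)) := by
        have : Mono (q.map (factorThruImage φ.f) ≫ q.map (image.ι φ.f)) := by
          rw [hfac]; infer_instance
        exact mono_of_mono _ (q.map (image.ι φ.f))
      haveI : IsIso (q.map (factorThruImage φ.f)) := isIso_of_mono_of_epi _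
      have hS : (ShortComplex.mk (image.ι φ.f) (cokernel.π (image.ι φ.f))
          (cokernel.condition _)).ShortExact := SerreAux.shortExact_of_mono _
      have hrel := congrArg p (K0.mk_rel _ hS)
      dsimp only [ShortComplex.mk] at hrel
      have id2 : p (K0.mk X₂) = p (K0.mk φ.Y') := key φ.s φ.hs
      have id1 : p (K0.mk X₁) = p (K0.mk (image φ.f)) :=
        keyIso _ _ (asIso (q.map (factorThruImage φ.f)))
      have e3 : q.obj (q.objPreimage T.X₃) ≅ q.obj (cokernel (image.ι φ.f)) := by
        refine (q.objObjPreimageIso T.X₃) ≪≫ ?_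
        refine (IsColimit.coconePointUniqueUpToIso hT.gIsCokernel
          (cokernelIsCokernel T.f)) ≪≫ ?_
        refine (cokernelEpiComp e₁.hom (T.f ≫ e₂.inv) ≪≫ cokernelCompIsIso T.f e₂.inv).symm ≪≫ ?_
        refine (cokernelCompIsIso φh (q.map φ.s)).symm ≪≫ cokernelIsoOfEq hcomp ≪≫ ?_
        refine cokernelIsoOfEq hfac.symm ≪≫
          cokernelEpiComp (q.map (factorThruImage φ.f)) (q.map (image.ι φ.f)) ≪≫ ?_
        exact (PreservesCokernel.iso q _).symm
      have id3 : p (K0.mk (q.objPreimage T.X₃)) = p (K0.mk (cokernel (image.ι φ.f))) :=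
        keyIso _ _ e3
      show p (K0.mk X₂) = p (K0.mk X₁) + p (K0.mk (q.objPreimage T.X₃))
      rw [id1, id2, id3]
      exact hrel
    let r₀ : FreeAbelianGroup A₃ →+ K0 A₂ ⧸ M :=
      FreeAbelianGroup.lift (fun Y => p (K0.mk (q.objPreimage Y)))
    have hr₀ : AddSubgroup.closure
        {x | ∃ S : ShortComplex A₃, S.ShortExact ∧
          x = FreeAbelianGroup.of S.X₂ - FreeAbelianGroup.of S.X₁
            - FreeAbelianGroup.of S.X₃} ≤ r₀.ker := by
      refine (AddSubgroup.closure_le _).2 ?_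
      rintro x ⟨T, hT, rfl⟩
      have h1 := liftSES T hT
      show r₀ _ = 0
      rw [map_sub, map_sub, FreeAbelianGroup.lift_apply_of, FreeAbelianGroup.lift_apply_of,
        FreeAbelianGroup.lift_apply_of, h1]
      abel
    let r : K0 A₃ →+ K0 A₂ ⧸ M := QuotientAddGroup.lift _ r₀ hr₀
    have hrg : r.comp g = p := by
      apply K0.hom_ext
      intro X
      rw [AddMonoidHom.comp_apply, hg]
      have h1 : r (K0.mk (q.obj X)) = p (K0.mk (q.objPreimage (q.obj X))) := by
        show QuotientAddGroup.lift _ r₀ hr₀ (QuotientAddGroup.mk (FreeAbelianGroup.of (q.obj X))) = _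
        rw [QuotientAddGroup.lift_mk']
        exact FreeAbelianGroup.lift_apply_of _ _
      rw [h1]
      exact keyIso _ _ (q.objObjPreimageIso (q.obj X))
    intro y
    constructor
    · intro hy
      have h1 : p y = 0 := by
        have h2 := DFunLike.congr_fun hrg y
        rw [AddMonoidHom.comp_apply, hy, map_zero] at h2
        exact h2.symm
      exact (QuotientAddGroup.eq_zero_iff _).1 h1
    · rintro ⟨z, rfl⟩
      have hgf : g.comp f = 0 := by
        apply K0Sub.hom_ext
        intro X hX
        rw [AddMonoidHom.comp_apply, hf, hg, AddMonoidHom.zero_apply]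
        exact K0.mk_zero_of_isZero (SerreAux.isZero_q_obj q hsub h0 hX)
      calc g (f z) = (g.comp f) z := rfl
        _ = 0 := by rw [hgf]; rfl
  · -- the degenerate case: no object satisfies `P`, so `q` is an equivalence
    have hPnone : ∀ X : A₂, ¬ P X := by
      intro X hX
      refine h0 (hsub 0 X 0 ⟨fun a b _ => (isZero_zero A₂).eq_of_tgt a b⟩ hX)
    have hWiso : serreW P ≤ MorphismProperty.isomorphisms A₂ := by
      intro X Y a ha
      exact absurd ha.1 (hPnone _)
    haveI : (𝟭 A₂).IsLocalization (serreW P) := Functor.IsLocalization.for_id _ hWiso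
    haveI : q.IsEquivalence := by
      have ι : (Localization.uniq (𝟭 A₂) q (serreW P)).functor ≅ q :=
        (Functor.leftUnitor _).symm ≪≫ Localization.compUniqFunctor (𝟭 A₂) q (serreW P)
      exact Functor.isEquivalence_of_iso ι
    let F := q.asEquivalence.inverse
    haveI : PreservesLimitsOfSize.{0, 0} F := inferInstance
    haveI : PreservesColimitsOfSize.{0, 0} F := inferInstance
    haveI : PreservesFiniteLimits F := PreservesLimitsOfSize.preservesFiniteLimits F
    haveI : PreservesFiniteColimits F := PreservesColimitsOfSize.preservesFiniteColimits F
    let ginv : K0 A₃ →+ K0 A₂ := K0.map F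
    have hinv : ginv.comp g = AddMonoidHom.id _ := by
      apply K0.hom_ext
      intro X
      rw [AddMonoidHom.comp_apply, hg, AddMonoidHom.id_apply, K0.map_mk]
      exact (K0.mk_eq_of_iso (q.asEquivalence.unitIso.app X).symm)
    have hzero : ∀ z : K0Sub P, f z = 0 := by
      intro z
      have hfz : f = 0 := by
        apply K0Sub.hom_ext
        intro X hX
        exact absurd hX (hPnone X)
      rw [hfz]; rfl
    intro y
    constructor
    · intro hy
      have h1 : y = 0 := by
        have h2 := DFunLike.congr_fun hinv y
        rw [AddMonoidHom.comp_apply, hy, map_zero, AddMonoidHom.id_apply] at h2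
        exact h2.symm
      exact ⟨0, by rw [hzero, h1]⟩
    · rintro ⟨z, rfl⟩
      rw [hzero, map_zero]
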